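/- Let A = Fin N be a collection of images with score vectors S_i : C → ℝ over a finite location set C with true location t, and fix k ∈ ℕ. For z : A → {0,1} define v_j(z) = ∑_i z_i · (S_i(j) − S_i(t)) for each j ≠ t, and suppose there exists a deletion set D ⊆ A with |{ j ≠ t : ∑_{i ∈ A∖D} S_i(j) ≥ ∑_{i ∈ A∖D} S_i(t) }| ≥ k. Then the maximum of ∑_i z_i over all z : A → {0,1} and h : C∖{t} → {0,1} satisfying h_j · v_j(z) ≥ 0 for all j ≠ t and ∑_{j ≠ t} h_j ≥ k, equals N minus the minimum cardinality of a deletion set D ⊆ A for which at least k locations j ≠ t satisfy ∑_{i ∈ A∖D} S_i(j) ≥ ∑_{i ∈ A∖D} S_i(t). That is, the mixed-integer program (7) with constraints (5) computes exactly the minimum-deletion top-k guarantee problem (3). -/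
import Mathlib

open Finset

private lemma sum_cast_mul_eq {N : ℕ} (z : Fin N → ℕ) (hz : ∀ i, z i ≤ 1) (f : Fin N → ℝ) :
    ∑ i, (z i : ℝ) * f i = ∑ i ∈ Finset.univ.filter (fun i => z i = 1), f i := by
  rw [Finset.sum_filter]
  refine Finset.sum_congr rfl fun i _ => ?_
  rcases Nat.le_one_iff_eq_zero_or_eq_one.mp (hz i) with h | h <;> simp [h]

private lemma sum_z_eq_card {N : ℕ} (z : Fin N → ℕ) (hz : ∀ i, z i ≤ 1) :
    ∑ i, z i = (Finset.univ.filter (fun i => z i = 1)).card := by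
  rw [Finset.card_filter]
  refine Finset.sum_congr rfl fun i _ => ?_
  rcases Nat.le_one_iff_eq_zero_or_eq_one.mp (hz i) with h | h <;> simp [h]

/-- The MILP for the top-`k` guarantee computes exactly the minimum-deletion problem:
provided some deletion set makes at least `k` locations `j ≠ t` beat the true
location `t`, the maximum of `∑ i z i` over binary keep indicators `z` and beat
indicators `h` satisfying the bilinear constraints `h j · (∑ i z i (S i j − S i t)) ≥ 0`
and `∑_{j ≠ t} h j ≥ k` equals `N` minus the minimum cardinality of a deletion set
`D` for which at least `k` locations `j ≠ t` have censored total score at least that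
of `t`. -/
theorem milp_topk_correct (N : ℕ) {C : Type*} [Fintype C] [DecidableEq C]
    (S : Fin N → C → ℝ) (t : C) (k : ℕ)
    (hfeas : ∃ D : Finset (Fin N),
      k ≤ (Finset.univ.filter
        (fun j : C => j ≠ t ∧ (∑ i ∈ Dᶜ, S i t) ≤ ∑ i ∈ Dᶜ, S i j)).card) :
    sSup {m : ℕ | ∃ z : Fin N → ℕ, ∃ h : C → ℕ,
        (∀ i, z i ≤ 1) ∧ (∀ j, h j ≤ 1) ∧
        (∀ j : C, j ≠ t →
          0 ≤ (h j : ℝ) * ∑ i, (z i : ℝ) * (S i j - S i t)) ∧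
        k ≤ (∑ j ∈ Finset.univ.erase t, h j) ∧
        m = ∑ i, z i} =
      N - sInf {m : ℕ | ∃ D : Finset (Fin N), D.card = m ∧
        k ≤ (Finset.univ.filter
          (fun j : C => j ≠ t ∧ (∑ i ∈ Dᶜ, S i t) ≤ ∑ i ∈ Dᶜ, S i j)).card} := by
  classical
  set T : Set ℕ := {m : ℕ | ∃ D : Finset (Fin N), D.card = m ∧
        k ≤ (Finset.univ.filter
          (fun j : C => j ≠ t ∧ (∑ i ∈ Dᶜ, S i t) ≤ ∑ i ∈ Dᶜ, S i j)).card} with hT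
  obtain ⟨D₀, hD₀⟩ := hfeas
  have hTne : T.Nonempty := ⟨D₀.card, D₀, rfl, hD₀⟩
  obtain ⟨D₁, hD₁card, hD₁⟩ := Nat.sInf_mem hTne
  -- Upper bound: every feasible m is ≤ N - sInf T
  have hbound : ∀ m ∈ {m : ℕ | ∃ z : Fin N → ℕ, ∃ h : C → ℕ,
        (∀ i, z i ≤ 1) ∧ (∀ j, h j ≤ 1) ∧
        (∀ j : C, j ≠ t →
          0 ≤ (h j : ℝ) * ∑ i, (z i : ℝ) * (S i j - S i t)) ∧
        k ≤ (∑ j ∈ Finset.univ.erase t, h j) ∧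
        m = ∑ i, z i}, m ≤ N - sInf T := by
    rintro m ⟨z, h, hz, hh, hcons, hk, hm⟩
    set D : Finset (Fin N) := Finset.univ.filter (fun i => ¬ z i = 1) with hD
    have hDc : Dᶜ = Finset.univ.filter (fun i => z i = 1) := by
      ext i; simp [hD]
    -- D is a feasible deletion set
    have hQ : k ≤ (Finset.univ.filter
        (fun j : C => j ≠ t ∧ (∑ i ∈ Dᶜ, S i t) ≤ ∑ i ∈ Dᶜ, S i j)).card := by
      refine hk.trans ?_
      have hsub : (Finset.univ.erase t).filter (fun j => h j ≠ 0) ⊆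
          Finset.univ.filter (fun j : C => j ≠ t ∧ (∑ i ∈ Dᶜ, S i t) ≤ ∑ i ∈ Dᶜ, S i j) := by
        intro j hj
        simp only [Finset.mem_filter, Finset.mem_erase, Finset.mem_univ, true_and,
          and_true] at hj ⊢
        obtain ⟨hjt, hjh⟩ := hj
        refine ⟨hjt, ?_⟩
        have h1 : h j = 1 := Nat.le_antisymm (hh j) (Nat.one_le_iff_ne_zero.mpr hjh)
        have := hcons j hjt
        rw [h1] at this
        simp only [Nat.cast_one, one_mul] at this
        rw [sum_cast_mul_eq z hz, ← hDc, Finset.sum_sub_distrib] at this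
        linarith
      calc ∑ j ∈ Finset.univ.erase t, h j
          = ∑ j ∈ (Finset.univ.erase t).filter (fun j => h j ≠ 0), h j := by
            rw [Finset.sum_filter_ne_zero]
        _ ≤ ∑ j ∈ (Finset.univ.erase t).filter (fun j => h j ≠ 0), 1 :=
            Finset.sum_le_sum fun j _ => hh j
        _ = ((Finset.univ.erase t).filter (fun j => h j ≠ 0)).card := by simp
        _ ≤ _ := Finset.card_le_card hsub
    have hle : sInf T ≤ D.card := Nat.sInf_le ⟨D, rfl, hQ⟩
    have hmcard : m = Dᶜ.card := by
      rw [hm, sum_z_eq_card z hz, hDc]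
    rw [hmcard, Finset.card_compl, Fintype.card_fin]
    exact Nat.sub_le_sub_left hle N
  -- Membership: N - sInf T is attained
  have hmem : (N - sInf T) ∈ {m : ℕ | ∃ z : Fin N → ℕ, ∃ h : C → ℕ,
        (∀ i, z i ≤ 1) ∧ (∀ j, h j ≤ 1) ∧
        (∀ j : C, j ≠ t →
          0 ≤ (h j : ℝ) * ∑ i, (z i : ℝ) * (S i j - S i t)) ∧
        k ≤ (∑ j ∈ Finset.univ.erase t, h j) ∧
        m = ∑ i, z i} := by
    refine ⟨fun i => if i ∈ D₁ then 0 else 1,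
      fun j => if j ≠ t ∧ (∑ i ∈ D₁ᶜ, S i t) ≤ ∑ i ∈ D₁ᶜ, S i j then 1 else 0,
      ?_, ?_, ?_, ?_, ?_⟩
    · intro i; dsimp only; split <;> simp
    · intro j; dsimp only; split <;> simp
    · intro j hjt
      dsimp only
      split
      · next hcond =>
        simp only [Nat.cast_one, one_mul]
        have hzle : ∀ i : Fin N, (if i ∈ D₁ then 0 else 1) ≤ 1 := by
          intro i; split <;> simp
        rw [sum_cast_mul_eq _ hzle]
        have : Finset.univ.filter (fun i => (if i ∈ D₁ then 0 else 1) = 1) = D₁ᶜ := by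
          ext i; by_cases hi : i ∈ D₁ <;> simp [hi]
        rw [this, Finset.sum_sub_distrib]
        linarith [hcond.2]
      · simp
    · have : ∑ j ∈ Finset.univ.erase t,
          (if j ≠ t ∧ (∑ i ∈ D₁ᶜ, S i t) ≤ ∑ i ∈ D₁ᶜ, S i j then 1 else 0) =
          (Finset.univ.filter
            (fun j : C => j ≠ t ∧ (∑ i ∈ D₁ᶜ, S i t) ≤ ∑ i ∈ D₁ᶜ, S i j)).card := by
        rw [Finset.sum_ite, Finset.sum_const_zero, Finset.sum_const, smul_eq_mul, mul_one,
          add_zero]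
        congr 1
        ext j
        simp only [Finset.mem_filter, Finset.mem_erase, Finset.mem_univ, true_and, and_true]
        tauto
      rw [this]
      exact hD₁
    · have hsum : ∑ i : Fin N, (if i ∈ D₁ then (0:ℕ) else 1) = D₁ᶜ.card := by
        rw [Finset.sum_ite, Finset.sum_const_zero, Finset.sum_const, smul_eq_mul, mul_one,
          zero_add]
        congr 1
        ext i; simp
      rw [hsum, Finset.card_compl, Fintype.card_fin, hD₁card]
  exact le_antisymm (csSup_le ⟨_, hmem⟩ hbound) (le_csSup ⟨N - sInf T, hbound⟩ hmem)
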